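/- Let P and W be Π¹₁-wellfounded level-1 trees. Then the order type of (rep(P), <^P) is strictly less than the order type of (rep(W), <^W) if and only if there exist a map σ factoring (P, W) and an element w ∈ W such that σ(p) <_BK w for every p ∈ P. -/

import Mathlib

noncomputable section

/-- Brouwer–Kleene strict order on finite sequences, relative to a strict order `lt`
on entries: `s <_BK t` iff `s` properly extends `t`, or at the least position where
both are defined and they differ, the entry of `s` is smaller; `[]` is greatest. -/
def BKltBy {α : Type*} (lt : α → α → Prop) : List α → List α → Prop
  | [], _ => False
  | _ :: _, [] => True
  | a :: s, b :: t => lt a b ∨ (a = b ∧ BKltBy lt s t)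

/-- The Brouwer–Kleene order on finite sequences of natural numbers. -/
def BKlt : List ℕ → List ℕ → Prop := BKltBy (· < ·)

/-- A level-1 tree: a set of nonempty finite sequences of naturals such that whenever
`s⌢(n) ∈ P`: if `s ≠ []` then `s ∈ P`, and `s⌢(m) ∈ P` for every `m < n`. -/
def IsLevel1Tree (P : Set (List ℕ)) : Prop :=
  (∀ s ∈ P, s ≠ []) ∧
  ∀ (s : List ℕ) (n : ℕ), s ++ [n] ∈ P →
    (s ≠ [] → s ∈ P) ∧ ∀ m < n, s ++ [m] ∈ P

/-- A level-1 tree is regular iff the sequence `(1)` is not in it. -/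
def Regular1 (P : Set (List ℕ)) : Prop := ([1] : List ℕ) ∉ P

/-- `P` is Π¹₁-wellfounded: there is no infinite branch through `P`. -/
def Pi11WF (P : Set (List ℕ)) : Prop :=
  ¬ ∃ x : ℕ → ℕ, ∀ n : ℕ, 0 < n → (List.ofFn fun i : Fin n => x i) ∈ P

/-- `rep(P)`: the pair `(p, none)` codes the element `(p)` and `(p, some n)` codes
`(p, n)`. -/
def Rep1 (P : Set (List ℕ)) : Set (List ℕ × Option ℕ) := {x | x.1 ∈ P}

def optNatLt : Option ℕ → Option ℕ → Prop
  | some n, some m => n < m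
  | some _, none => True
  | _, _ => False

/-- The order `<^P` on `rep(P)`. -/
def Rep1lt (x y : List ℕ × Option ℕ) : Prop :=
  BKlt x.1 y.1 ∨ (x.1 = y.1 ∧ optNatLt x.2 y.2)

/-- The first uncountable ordinal. -/
def omega1 : Ordinal := (Cardinal.aleph 1).ord

/-- The tuple `(f p)_{p ∈ P}` respects the level-1 tree `P`: each entry is a countable
limit ordinal and `p ↦ f p` is order preserving from `(P, <_BK)` to the ordinals. -/
def Respects1 (P : Set (List ℕ)) (f : List ℕ → Ordinal) : Prop :=
  (∀ p ∈ P, f p < omega1 ∧ Order.IsSuccLimit (f p)) ∧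
  ∀ p ∈ P, ∀ q ∈ P, BKlt p q → f p < f q

/-- `σ` factors `(P, W)`: `σ(∅) = ∅` and `σ` preserves the Brouwer–Kleene order. -/
def Factors (P W : Set (List ℕ)) (σ : List ℕ → List ℕ) : Prop :=
  σ [] = [] ∧ (∀ p ∈ P, σ p ∈ insert ([] : List ℕ) W) ∧
  ∀ s ∈ insert ([] : List ℕ) P, ∀ t ∈ insert ([] : List ℕ) P,
    BKlt s t → BKlt (σ s) (σ t)

/-- Partial level ≤1 tree `(P, t)`; `t = none` codes the value `-1`. -/
def IsPartialLevelLe1Tree (P : Set (List ℕ)) (t : Option (List ℕ)) : Prop :=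
  P.Finite ∧ IsLevel1Tree P ∧ Regular1 P ∧
  (match t with
   | none => P.Nonempty
   | some s => s ∉ P ∧ IsLevel1Tree (insert s P) ∧ Regular1 (insert s P))

/-- The tuple coded by `f` on `P` together with the value `v` at `t` respects the
partial level ≤1 tree `(P, t)`. -/
def RespectsP1 (P : Set (List ℕ)) (t : Option (List ℕ)) (f : List ℕ → Ordinal)
    (v : Ordinal) : Prop :=
  match t with
  | none => Respects1 P f ∧ v < Ordinal.omega0
  | some s => Respects1 P f ∧
      Respects1 (insert s P) (fun p => if p = s then v else f p)

/-- A level-2 tree of uniform cofinalities. -/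
structure Level2Tree where
  dom : Set (List (List ℕ))
  tr : List (List ℕ) → Set (List ℕ)
  nd : List (List ℕ) → Option (List ℕ)
  nil_mem : [] ∈ dom
  take_mem : ∀ q ∈ dom, ∀ n : ℕ, q.take n ∈ dom
  lvl1 : ∀ q ∈ dom, IsLevel1Tree {a : List ℕ | q ++ [a] ∈ dom}
  tr_nil : tr [] = ∅
  nd_nil : nd [] = some [0]
  ptree : ∀ q ∈ dom, IsPartialLevelLe1Tree (tr q) (nd q)
  compl : ∀ q ∈ dom, ∀ l : ℕ, l < q.length →
    ∃ s : List ℕ, nd (q.take l) = some s ∧ tr (q.take (l + 1)) = insert s (tr (q.take l))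

/-- The node `Q_node(q)`, read as an element of `ℕ^{<ω}`. -/
def Level2Tree.ndVal (Q : Level2Tree) (q : List (List ℕ)) : List ℕ := (Q.nd q).getD []

/-- The interleaved sequence `ᾱ ⊕ q`. -/
def Level2Tree.oplus (Q : Level2Tree) (f : List ℕ → Ordinal) (q : List (List ℕ)) :
    List (Ordinal × Option (List ℕ)) :=
  (List.range q.length).map fun i => (f (Q.ndVal (q.take i)), some (q.getD i []))

/-- The interleaved sequence `ᾱ ⊕ q⌢(-1)`, where `v` is the entry of the tuple at
the node `Q_node(q)`. -/
def Level2Tree.oplusNeg (Q : Level2Tree) (f : List ℕ → Ordinal) (v : Ordinal)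
    (q : List (List ℕ)) : List (Ordinal × Option (List ℕ)) :=
  Q.oplus f q ++ [(v, none)]

def optNodeLt : Option (List ℕ) → Option (List ℕ) → Prop
  | none, some _ => True
  | some s, some t => BKlt s t
  | _, _ => False

def entryLt (x y : Ordinal × Option (List ℕ)) : Prop :=
  x.1 < y.1 ∨ (x.1 = y.1 ∧ optNodeLt x.2 y.2)

/-- The order `<^{²Q}` on interleaved sequences. -/
def Rep2lt : List (Ordinal × Option (List ℕ)) → List (Ordinal × Option (List ℕ)) → Prop :=
  BKltBy entryLt

/-- `rep(²Q)`. -/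
def Level2Tree.rep (Q : Level2Tree) : Set (List (Ordinal × Option (List ℕ))) :=
  {x | (∃ q ∈ Q.dom, ∃ f, Respects1 (Q.tr q) f ∧ x = Q.oplus f q) ∨
       (∃ q ∈ Q.dom, ∃ f v, RespectsP1 (Q.tr q) (Q.nd q) f v ∧ x = Q.oplusNeg f v q)}

/-- Π¹₂-wellfoundedness of a level-2 tree. -/
def Level2Tree.Pi12WF (Q : Level2Tree) : Prop :=
  (∀ q ∈ Q.dom, Pi11WF {a : List ℕ | q ++ [a] ∈ Q.dom}) ∧
  ∀ y : ℕ → List ℕ, (∀ n : ℕ, (List.ofFn fun i : Fin n => y i) ∈ Q.dom) →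
    ¬ Pi11WF (⋃ n : ℕ, Q.tr (List.ofFn fun i : Fin n => y i))

/-- The type of elements of `rep(Q)` for a level ≤2 tree `Q`: `inl` for the level-1
part, `inr` for the level-2 part. -/
abbrev RepLe2Elt := (List ℕ × Option ℕ) ⊕ (List (Ordinal × Option (List ℕ)))

/-- `rep(Q)` for the level ≤2 tree `Q = (P, Q₂)`. -/
def RepLe2 (P : Set (List ℕ)) (Q : Level2Tree) : Set RepLe2Elt :=
  {x | match x with
       | Sum.inl a => a ∈ Rep1 P
       | Sum.inr b => b ∈ Q.rep}

/-- The order `<^Q` for a level ≤2 tree: the level-1 part comes first. -/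
def RepLe2lt : RepLe2Elt → RepLe2Elt → Prop := Sum.Lex Rep1lt Rep2lt

/-- Π¹₂-wellfoundedness of a level ≤2 tree. -/
def Pi12WFle2 (P : Set (List ℕ)) (Q : Level2Tree) : Prop :=
  Pi11WF P ∧ Q.Pi12WF

/-- The sequence of the first `n` values of `x`. -/
def prefixSeq {α : Type*} (x : ℕ → α) (n : ℕ) : List α := List.ofFn fun i : Fin n => x i

/-- `σ` is a winning strategy for Player I (who plays at even rounds) in the game
with payoff set `A`. -/
def WinningStratI (A : Set (ℕ → ℕ)) (σ : List ℕ → ℕ) : Prop :=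
  ∀ x : ℕ → ℕ, (∀ n, x (2 * n) = σ (prefixSeq x (2 * n))) → x ∈ A

/-- `σ` is a winning strategy for Player II (who plays at odd rounds). -/
def WinningStratII (A : Set (ℕ → ℕ)) (σ : List ℕ → ℕ) : Prop :=
  ∀ x : ℕ → ℕ, (∀ n, x (2 * n + 1) = σ (prefixSeq x (2 * n + 1))) → x ∉ A

/-- The Gale–Stewart game with payoff `A` is determined. -/
def GameDetermined (A : Set (ℕ → ℕ)) : Prop :=
  (∃ σ, WinningStratI A σ) ∨ (∃ σ, WinningStratII A σ)

/-- `A` is analytic: the projection of a closed subset of the plane of Baire space,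
i.e., the projection of the set of branches of a set of pairs of finite sequences. -/
def IsAnalytic (A : Set (ℕ → ℕ)) : Prop :=
  ∃ T : Set (List ℕ × List ℕ),
    A = {x | ∃ y : ℕ → ℕ, ∀ n : ℕ, (prefixSeq x n, prefixSeq y n) ∈ T}

/-- Boldface Π¹₁-determinacy: every game with coanalytic payoff is determined. -/
def BoldfacePi11Determinacy : Prop :=
  ∀ A : Set (ℕ → ℕ), IsAnalytic Aᶜ → GameDetermined A

/-- An infinite level-1 tower. -/
def IsInfLevel1Tower (P : ℕ → Set (List ℕ)) : Prop :=
  ∀ i : ℕ, IsLevel1Tree (P i) ∧ (P i).Finite ∧ (P i).ncard = i ∧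
    ∀ j : ℕ, i < j → P i ⊆ P j

/-- `o` is a limit point of the set of ordinals `E`. -/
def IsLimitPtOf (E : Set Ordinal) (o : Ordinal) : Prop :=
  (∃ e ∈ E, e < o) ∧ ∀ b < o, ∃ e ∈ E, b < e ∧ e < o

/-- `E` is a club in `ω₁`. -/
def IsClubInOmega1 (E : Set Ordinal) : Prop :=
  (∀ o ∈ E, o < omega1) ∧
  (∀ o < omega1, ∃ e ∈ E, o < e) ∧
  ∀ o < omega1, IsLimitPtOf E o → o ∈ E

/-- The tuple coded by `f` lies in `[E]^{P↑}`. -/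
def RespectsIn (E : Set Ordinal) (P : Set (List ℕ)) (f : List ℕ → Ordinal) : Prop :=
  Respects1 P f ∧ ∀ p ∈ P, f p ∈ E ∧ IsLimitPtOf E (f p)

/-- The tuple coded by `(f, v)` lies in `[E]^{(P,t)↑}`. -/
def RespectsPIn (E : Set Ordinal) (P : Set (List ℕ)) (t : Option (List ℕ))
    (f : List ℕ → Ordinal) (v : Ordinal) : Prop :=
  RespectsP1 P t f v ∧ (∀ p ∈ P, f p ∈ E ∧ IsLimitPtOf E (f p)) ∧
  (t ≠ none → v ∈ E)

/-- `rep(²Q) ↾ E`. -/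
def Level2Tree.repRestrict (Q : Level2Tree) (E : Set Ordinal) :
    Set (List (Ordinal × Option (List ℕ))) :=
  {x | (∃ q ∈ Q.dom, ∃ f, RespectsIn E (Q.tr q) f ∧ x = Q.oplus f q) ∨
       (∃ q ∈ Q.dom, ∃ f v, RespectsPIn E (Q.tr q) (Q.nd q) f v ∧ x = Q.oplusNeg f v q)}

/-- `rep(Q) ↾ E` for a level ≤2 tree `Q = (P, Q₂)`. -/
def RepLe2Restrict (P : Set (List ℕ)) (Q : Level2Tree) (E : Set Ordinal) :
    Set RepLe2Elt :=
  {x | match x with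
       | Sum.inl a => a ∈ Rep1 P
       | Sum.inr b => b ∈ Q.repRestrict E}

/-- `C` is a closed subset of `X` in the order topology of the strict linear order
`lt` on `X`: `C` contains all of its one-sided limit points in `X`. -/
def OrderClosedIn {σ : Type*} (lt : σ → σ → Prop) (X C : Set σ) : Prop :=
  (∀ v ∈ X, (∃ w ∈ C, lt w v) →
      (∀ w ∈ X, lt w v → ∃ u ∈ C, lt w u ∧ lt u v) → v ∈ C) ∧
  (∀ v ∈ X, (∃ w ∈ C, lt v w) →
      (∀ w ∈ X, lt v w → ∃ u ∈ C, lt v u ∧ lt u w) → v ∈ C)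

end

theorem BKlt_irrefl : ∀ s : List ℕ, ¬ BKlt s s
  | [] => fun h => h
  | a :: s => fun h => by
      rcases h with h | ⟨-, h⟩
      · exact lt_irrefl a h
      · exact BKlt_irrefl s h

theorem BKlt_trans : ∀ s t u : List ℕ, BKlt s t → BKlt t u → BKlt s u
  | [], _, _, h, _ => h.elim
  | _ :: _, [], _, _, h => h.elim
  | _ :: _, _ :: _, [], _, _ => trivial
  | a :: s, b :: t, c :: u, h1, h2 => by
      rcases h1 with h1 | ⟨rfl, h1⟩ <;> rcases h2 with h2 | ⟨rfl, h2⟩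
      · exact Or.inl (h1.trans h2)
      · exact Or.inl h1
      · exact Or.inl h2
      · exact Or.inr ⟨rfl, BKlt_trans _ _ _ h1 h2⟩

theorem BKlt_trichotomy : ∀ s t : List ℕ, BKlt s t ∨ s = t ∨ BKlt t s
  | [], [] => Or.inr (Or.inl rfl)
  | [], _ :: _ => Or.inr (Or.inr trivial)
  | _ :: _, [] => Or.inl trivial
  | a :: s, b :: t => by
      rcases Nat.lt_trichotomy a b with h | rfl | h
      · exact Or.inl (Or.inl h)
      · rcases BKlt_trichotomy s t with h | rfl | h
        · exact Or.inl (Or.inr ⟨rfl, h⟩)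
        · exact Or.inr (Or.inl rfl)
        · exact Or.inr (Or.inr (Or.inr ⟨rfl, h⟩))
      · exact Or.inr (Or.inr (Or.inl h))

theorem BKlt_nil_right {s : List ℕ} (h : s ≠ []) : BKlt s [] := by
  cases s with
  | nil => exact absurd rfl h
  | cons a t => trivial

theorem optNatLt_acc_some : ∀ n : ℕ, Acc optNatLt (some n) := by
  intro n
  induction n using Nat.strong_induction_on with
  | _ n ih =>
    constructor
    intro y hy
    cases y with
    | none => exact hy.elim
    | some m => exact ih m hy

instance optNatLt.isWellOrder : IsWellOrder (Option ℕ) optNatLt where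
  trichotomous := by
    have key : ∀ a b, optNatLt a b ∨ a = b ∨ optNatLt b a := by
      rintro (_ | n) (_ | m)
      · exact Or.inr (Or.inl rfl)
      · exact Or.inr (Or.inr trivial)
      · exact Or.inl trivial
      · rcases Nat.lt_trichotomy n m with h | rfl | h
        · exact Or.inl h
        · exact Or.inr (Or.inl rfl)
        · exact Or.inr (Or.inr h)
    intro a b hab hba
    rcases key a b with h | h | h
    · exact absurd h hab
    · exact h
    · exact absurd h hba
  wf := by
    constructor
    rintro (_ | n)
    · constructor
      rintro (_ | m) hy
      · exact hy.elim
      · exact optNatLt_acc_some m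
    · exact optNatLt_acc_some n

theorem bk_isWellOrder (P : Set (List ℕ))
    (h1 : IsWellOrder {x // x ∈ Rep1 P} (fun a b => Rep1lt a.1 b.1)) :
    IsWellOrder {p // p ∈ P} (fun a b : {p // p ∈ P} => BKlt a.1 b.1) where
  trichotomous a b := by
    rcases BKlt_trichotomy a.1 b.1 with h | h | h
    · exact fun hab _ => absurd h hab
    · exact fun _ _ => Subtype.ext h
    · exact fun _ hba => absurd h hba
  wf := by
    have hw : WellFounded (fun a b : {x // x ∈ Rep1 P} => Rep1lt a.1 b.1) := h1.wf
    exact Subrelation.wf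
      (r := InvImage (fun a b : {x // x ∈ Rep1 P} => Rep1lt a.1 b.1)
        (fun p : {p // p ∈ P} => (⟨(p.1, none), p.2⟩ : {x // x ∈ Rep1 P})))
      (fun {a b} h => Or.inl h) (InvImage.wf _ hw)

def repIso (P : Set (List ℕ)) :
    (fun a b : {x // x ∈ Rep1 P} => Rep1lt a.1 b.1) ≃r
      Prod.Lex (fun a b : {p // p ∈ P} => BKlt a.1 b.1) optNatLt where
  toFun x := (⟨x.1.1, x.2⟩, x.1.2)
  invFun y := ⟨(y.1.1, y.2), y.1.2⟩
  left_inv x := rfl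
  right_inv y := rfl
  map_rel_iff' := by
    rintro ⟨⟨p, o⟩, hp⟩ ⟨⟨q, u⟩, hq⟩
    simp only [Prod.lex_def, Rep1lt, Subtype.mk_eq_mk, Equiv.coe_fn_mk]
    exact or_congr Iff.rfl (and_congr Subtype.ext_iff Iff.rfl)

/-- For Π¹₁-wellfounded level-1 trees `P`, `W`, the order type of
`(rep(P), <^P)` is strictly less than that of `(rep(W), <^W)` iff there are `σ`
factoring `(P, W)` and `w ∈ W` with `σ(p) <_BK w` for every `p ∈ P`. -/
theorem stmt5 (P W : Set (List ℕ)) (hP : IsLevel1Tree P) (hW : IsLevel1Tree W)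
    (hPwf : Pi11WF P) (hWwf : Pi11WF W)
    (h1 : IsWellOrder {x // x ∈ Rep1 P} (fun a b => Rep1lt a.1 b.1))
    (h2 : IsWellOrder {x // x ∈ Rep1 W} (fun a b => Rep1lt a.1 b.1)) :
    @Ordinal.type {x // x ∈ Rep1 P} (fun a b => Rep1lt a.1 b.1) h1 <
      @Ordinal.type {x // x ∈ Rep1 W} (fun a b => Rep1lt a.1 b.1) h2 ↔
    ∃ σ : List ℕ → List ℕ, ∃ w ∈ W, Factors P W σ ∧ ∀ p ∈ P, BKlt (σ p) w := by
  classical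
  haveI iP : IsWellOrder {p // p ∈ P} (fun a b : {p // p ∈ P} => BKlt a.1 b.1) :=
    bk_isWellOrder P h1
  haveI iW : IsWellOrder {q // q ∈ W} (fun a b : {q // q ∈ W} => BKlt a.1 b.1) :=
    bk_isWellOrder W h2
  have hpos : 0 < Ordinal.type optNatLt :=
    pos_iff_ne_zero.2 (Ordinal.type_ne_zero_of_nonempty _)
  have hrepP : Ordinal.type (fun a b : {x // x ∈ Rep1 P} => Rep1lt a.1 b.1)
      = Ordinal.type optNatLt * Ordinal.type (fun a b : {p // p ∈ P} => BKlt a.1 b.1) := by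
    rw [(repIso P).ordinal_type_eq, Ordinal.type_prod_lex]
  have hrepW : Ordinal.type (fun a b : {x // x ∈ Rep1 W} => Rep1lt a.1 b.1)
      = Ordinal.type optNatLt * Ordinal.type (fun a b : {q // q ∈ W} => BKlt a.1 b.1) := by
    rw [(repIso W).ordinal_type_eq, Ordinal.type_prod_lex]
  rw [hrepP, hrepW, mul_lt_mul_iff_right₀ hpos]
  constructor
  · intro hlt
    obtain ⟨f⟩ := Ordinal.type_lt_iff.1 hlt
    refine ⟨fun p => if h : p ∈ P then (f ⟨p, h⟩).1 else [], f.top.1, f.top.2,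
      ⟨dif_neg (fun h => hP.1 [] h rfl), ?_, ?_⟩, ?_⟩
    · intro p hp
      simp only [dif_pos hp]
      exact Set.mem_insert_of_mem _ (f ⟨p, hp⟩).2
    · intro s hs t ht hst
      rcases Set.mem_insert_iff.1 hs with rfl | hs
      · exact hst.elim
      rcases Set.mem_insert_iff.1 ht with rfl | ht
      · simp only [dif_pos hs, dif_neg (fun h => hP.1 [] h rfl)]
        exact BKlt_nil_right (hW.1 _ (f ⟨s, hs⟩).2)
      · simp only [dif_pos hs, dif_pos ht]
        exact f.map_rel_iff.2 hst
    · intro p hp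
      simp only [dif_pos hp]
      exact f.lt_top ⟨p, hp⟩
  · rintro ⟨σ, w, hw, ⟨hnil, hmem, hord⟩, hbd⟩
    have hσW : ∀ p, p ∈ P → σ p ∈ W := by
      intro p hp
      rcases Set.mem_insert_iff.1 (hmem p hp) with h | h
      · exfalso
        have hb := hbd p hp
        rw [h] at hb
        exact hb
      · exact h
    have emb : (fun a b : {p // p ∈ P} => BKlt a.1 b.1) ↪r
        Subrel (fun a b : {q // q ∈ W} => BKlt a.1 b.1)
          (fun b : {q // q ∈ W} => BKlt b.1 w) :=
      RelEmbedding.ofMonotone (fun p => ⟨⟨σ p.1, hσW p.1 p.2⟩, hbd p.1 p.2⟩)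
        (fun a b h =>
          hord a.1 (Set.mem_insert_of_mem _ a.2) b.1 (Set.mem_insert_of_mem _ b.2) h)
    have h3 : Ordinal.type (fun a b : {p // p ∈ P} => BKlt a.1 b.1) ≤
        Ordinal.typein (fun a b : {q // q ∈ W} => BKlt a.1 b.1) ⟨w, hw⟩ := by
      rw [← Ordinal.type_subrel]
      exact emb.ordinal_type_le
    exact lt_of_le_of_lt h3 (Ordinal.typein_lt_type _ _)
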